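/- Let γ > 0 and let x be a linearly stable steady state of the SBCM with parameters γ and δ. Then for every persuadable node i there exists a neighbor j of i such that |x_i − x_j| ≤ √(max(δ, 1/γ)). -/

import Mathlib

open Finset Filter

namespace SBCM

variable {V : Type*} [Fintype V] [DecidableEq V]

/-- Sigmoidal influence weight. -/
noncomputable def wt (G : SimpleGraph V) [DecidableRel G.Adj] (γ δ : ℝ) (x : V → ℝ)
    (i j : V) : ℝ :=
  if G.Adj i j then 1 / (1 + Real.exp (γ * (x i - x j) ^ 2 - γ * δ)) else 0

/-- SBCM update operator. -/
noncomputable def F (G : SimpleGraph V) [DecidableRel G.Adj] (Z : Finset V) (γ δ : ℝ)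
    (x : V → ℝ) (i : V) : ℝ :=
  if i ∈ Z then 0
  else (∑ j, wt G γ δ x i j * (x j - x i)) / (∑ j, wt G γ δ x i j)

/-- Jacobian block over the persuadable nodes. -/
noncomputable def Jp (G : SimpleGraph V) [DecidableRel G.Adj] (Z : Finset V) (γ δ : ℝ)
    (x : V → ℝ) : Matrix {v : V // v ∉ Z} {v : V // v ∉ Z} ℝ :=
  fun i j => fderiv ℝ (fun y : V → ℝ => F G Z γ δ y i.val) x (Pi.single (j : V) (1 : ℝ))

/-- `μ` is a (real) eigenvalue of the matrix `M`. -/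
def HasEig {n : Type*} [Fintype n] (M : Matrix n n ℝ) (μ : ℝ) : Prop :=
  ∃ φ : n → ℝ, φ ≠ 0 ∧ M.mulVec φ = μ • φ

/-- All eigenvalues of `M` are strictly negative. -/
def LinStable {n : Type*} [Fintype n] (M : Matrix n n ℝ) : Prop :=
  ∀ μ : ℝ, HasEig M μ → μ < 0

/-- `M` has a strictly positive eigenvalue. -/
def LinUnstable {n : Type*} [Fintype n] (M : Matrix n n ℝ) : Prop :=
  ∃ μ : ℝ, 0 < μ ∧ HasEig M μ

end SBCM

set_option linter.unusedSectionVars false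

namespace SBCM4

open SBCM

variable {V : Type*} [Fintype V] [DecidableEq V]
variable (G : SimpleGraph V) [DecidableRel G.Adj] (Z : Finset V) (γ δ : ℝ) (x : V → ℝ)

/-- Symmetrized interaction coefficient. -/
noncomputable def Af (p q : V) : ℝ :=
  wt G γ δ x p q * (2 * γ * (x p - x q) ^ 2 * (1 - wt G γ δ x p q) - 1)

lemma wt_nonneg (i j : V) : 0 ≤ wt G γ δ x i j := by
  unfold wt; split
  · positivity
  · exact le_refl _

lemma wt_pos {i j : V} (h : G.Adj i j) : 0 < wt G γ δ x i j := by
  unfold wt; rw [if_pos h]; positivity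

lemma wt_self (i : V) : wt G γ δ x i i = 0 := by
  unfold wt; rw [if_neg (G.irrefl)]

lemma wt_symm (i j : V) : wt G γ δ x i j = wt G γ δ x j i := by
  unfold wt
  have h2 : (x i - x j) ^ 2 = (x j - x i) ^ 2 := by ring
  by_cases h : G.Adj i j
  · rw [if_pos h, if_pos h.symm, h2]
  · rw [if_neg h, if_neg (fun hc => h hc.symm)]

lemma Af_symm (i j : V) : Af G γ δ x i j = Af G γ δ x j i := by
  unfold Af
  have h2 : (x i - x j) ^ 2 = (x j - x i) ^ 2 := by ring
  rw [h2, wt_symm]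

lemma Af_self (i : V) : Af G γ δ x i i = 0 := by
  unfold Af; rw [wt_self]; ring

lemma sum_wt_pos (i : V) (h : ∃ j, G.Adj i j) : 0 < ∑ j, wt G γ δ x i j := by
  obtain ⟨j, hj⟩ := h
  have := wt_pos G γ δ x hj
  exact Finset.sum_pos' (fun k _ => wt_nonneg G γ δ x i k)
    ⟨j, Finset.mem_univ j, this⟩

/-- derivative of the scalar sigmoid. -/
lemma hasDerivAt_sig (t : ℝ) :
    HasDerivAt (fun u : ℝ => 1 / (1 + Real.exp (γ * u ^ 2 - γ * δ)))
      (-(2 * γ * t) *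
        ((1 / (1 + Real.exp (γ * t ^ 2 - γ * δ))) *
          (1 - 1 / (1 + Real.exp (γ * t ^ 2 - γ * δ))))) t := by
  have h1 : HasDerivAt (fun u : ℝ => γ * u ^ 2 - γ * δ) (γ * (2 * t)) t := by
    simpa using (((hasDerivAt_pow 2 t).const_mul γ).sub_const (γ * δ))
  have h2 : HasDerivAt (fun u : ℝ => 1 + Real.exp (γ * u ^ 2 - γ * δ))
      (Real.exp (γ * t ^ 2 - γ * δ) * (γ * (2 * t))) t := by
    simpa using (h1.exp.const_add 1)
  have hne : (1 + Real.exp (γ * t ^ 2 - γ * δ)) ≠ 0 := by positivity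
  have h3 := h2.inv hne
  have heq : -(Real.exp (γ * t ^ 2 - γ * δ) * (γ * (2 * t))) /
        (1 + Real.exp (γ * t ^ 2 - γ * δ)) ^ 2
      = -(2 * γ * t) *
        ((1 / (1 + Real.exp (γ * t ^ 2 - γ * δ))) *
          (1 - 1 / (1 + Real.exp (γ * t ^ 2 - γ * δ)))) := by
    field_simp
    ring
  rw [heq] at h3
  simp only [one_div] at h3 ⊢
  exact h3

/-- derivative of the weight function in the opinion vector. -/
lemma hasFDerivAt_wt (i j : V) :
    HasFDerivAt (fun y : V → ℝ => wt G γ δ y i j)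
      ((-(2 * γ * (x i - x j)) * (wt G γ δ x i j * (1 - wt G γ δ x i j))) •
        ((ContinuousLinearMap.proj i : (V → ℝ) →L[ℝ] ℝ) - (ContinuousLinearMap.proj j : (V → ℝ) →L[ℝ] ℝ))) x := by
  by_cases h : G.Adj i j
  · have hlin : HasFDerivAt (fun y : V → ℝ => y i - y j)
        ((ContinuousLinearMap.proj i : (V → ℝ) →L[ℝ] ℝ) - (ContinuousLinearMap.proj j : (V → ℝ) →L[ℝ] ℝ)) x :=
      HasFDerivAt.sub
        ((ContinuousLinearMap.proj i : (V → ℝ) →L[ℝ] ℝ).hasFDerivAt)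
        ((ContinuousLinearMap.proj j : (V → ℝ) →L[ℝ] ℝ).hasFDerivAt)
    have hsig := (hasDerivAt_sig γ δ (x i - x j)).comp_hasFDerivAt x hlin
    have hfun : (fun y : V → ℝ => wt G γ δ y i j)
        = (fun u : ℝ => 1 / (1 + Real.exp (γ * u ^ 2 - γ * δ))) ∘ (fun y : V → ℝ => y i - y j) := by
      funext y; simp [wt, if_pos h, Function.comp]
    have hwt : wt G γ δ x i j = 1 / (1 + Real.exp (γ * (x i - x j) ^ 2 - γ * δ)) := by
      simp [wt, if_pos h]
    rw [hfun, hwt]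
    exact hsig
  · have hfun : (fun y : V → ℝ => wt G γ δ y i j) = fun _ => (0 : ℝ) := by
      funext y; simp [wt, if_neg h]
    have hwt : wt G γ δ x i j = 0 := by simp [wt, if_neg h]
    rw [hfun, hwt]
    simpa using (hasFDerivAt_const (0 : ℝ) x)

/-- The Jacobian entries at a steady state. -/
lemma Jp_eq (hnbr : ∀ i : V, i ∉ Z → ∃ j, G.Adj i j)
    (hss : ∀ i, F G Z γ δ x i = 0) (p q : {v : V // v ∉ Z}) :
    Jp G Z γ δ x p q =
      ((if (p : V) = (q : V) then ∑ j, Af G γ δ x p j else 0) - Af G γ δ x p q)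
        / (∑ j, wt G γ δ x p j) := by
  set i : V := (p : V) with hi
  have hiZ : i ∉ Z := p.2
  -- derivative of the strength S
  set W' : V → (V → ℝ) →L[ℝ] ℝ := fun j =>
    ((-(2 * γ * (x i - x j)) * (wt G γ δ x i j * (1 - wt G γ δ x i j))) •
      ((ContinuousLinearMap.proj i : (V → ℝ) →L[ℝ] ℝ) - (ContinuousLinearMap.proj j : (V → ℝ) →L[ℝ] ℝ))) with hW'
  have hS : HasFDerivAt (fun y : V → ℝ => ∑ j, wt G γ δ y i j) (∑ j, W' j) x :=
    HasFDerivAt.fun_sum (fun j _ => hasFDerivAt_wt G γ δ x i j)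
  set N' : V → (V → ℝ) →L[ℝ] ℝ := fun j =>
    (wt G γ δ x i j • (((ContinuousLinearMap.proj j : (V → ℝ) →L[ℝ] ℝ) - (ContinuousLinearMap.proj i : (V → ℝ) →L[ℝ] ℝ))) + (x j - x i) • W' j) with hN'
  have hN : HasFDerivAt (fun y : V → ℝ => ∑ j, wt G γ δ y i j * (y j - y i)) (∑ j, N' j) x := by
    refine HasFDerivAt.fun_sum (fun j _ => ?_)
    have hp1 : HasFDerivAt (fun y : V → ℝ => y j)
        (ContinuousLinearMap.proj j : (V → ℝ) →L[ℝ] ℝ) x :=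
      (ContinuousLinearMap.proj j : (V → ℝ) →L[ℝ] ℝ).hasFDerivAt
    have hp2 : HasFDerivAt (fun y : V → ℝ => y i)
        (ContinuousLinearMap.proj i : (V → ℝ) →L[ℝ] ℝ) x :=
      (ContinuousLinearMap.proj i : (V → ℝ) →L[ℝ] ℝ).hasFDerivAt
    have hlin : HasFDerivAt (fun y : V → ℝ => y j - y i)
        ((ContinuousLinearMap.proj j : (V → ℝ) →L[ℝ] ℝ) - (ContinuousLinearMap.proj i : (V → ℝ) →L[ℝ] ℝ)) x :=
      hp1.sub hp2
    exact (hasFDerivAt_wt G γ δ x i j).mul hlin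
  set Sx : ℝ := ∑ j, wt G γ δ x i j with hSx
  have hSpos : 0 < Sx := sum_wt_pos G γ δ x i (hnbr i hiZ)
  have hSne : Sx ≠ 0 := ne_of_gt hSpos
  have hNx : (∑ j, wt G γ δ x i j * (x j - x i)) = 0 := by
    have := hss i
    rw [F, if_neg hiZ] at this
    rcases div_eq_zero_iff.mp this with h | h
    · exact h
    · exact absurd h hSne
  have hSinv : HasFDerivAt (fun y : V → ℝ => (∑ j, wt G γ δ y i j)⁻¹)
      (-((Sx ^ 2)⁻¹ • (∑ j, W' j))) x := by
    have := (hasDerivAt_inv hSne).comp_hasFDerivAt x hS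
    simpa [Function.comp_def, neg_smul] using this
  have hF : HasFDerivAt (fun y : V → ℝ => F G Z γ δ y i)
      (((∑ j, wt G γ δ x i j * (x j - x i)) • (-((Sx ^ 2)⁻¹ • (∑ j, W' j)))
        + (Sx)⁻¹ • (∑ j, N' j))) x := by
    have hfun : (fun y : V → ℝ => F G Z γ δ y i)
        = fun y : V → ℝ => (∑ j, wt G γ δ y i j * (y j - y i)) * (∑ j, wt G γ δ y i j)⁻¹ := by
      funext y; rw [F, if_neg hiZ, div_eq_mul_inv]
    rw [hfun]
    exact hN.mul hSinv
  rw [hNx] at hF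
  simp only [zero_smul, zero_add] at hF
  have hderiv := hF.fderiv
  rw [Jp, hderiv]
  -- now evaluate the continuous linear map at Pi.single q 1
  have heval : ((Sx)⁻¹ • (∑ j, N' j)) (Pi.single (q : V) (1 : ℝ))
      = ((if i = (q : V) then ∑ j, Af G γ δ x i j else 0) - Af G γ δ x i q) / Sx := by
    have hterm : ∀ j : V, (N' j) (Pi.single (q : V) (1 : ℝ))
        = Af G γ δ x i j * ((Pi.single (q : V) (1 : ℝ) : V → ℝ) i - (Pi.single (q : V) (1 : ℝ) : V → ℝ) j) := by
      intro j
      simp only [hN', hW', ContinuousLinearMap.add_apply, ContinuousLinearMap.smul_apply,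
        ContinuousLinearMap.sub_apply, ContinuousLinearMap.proj_apply, smul_eq_mul]
      unfold Af
      ring
    rw [ContinuousLinearMap.smul_apply, ContinuousLinearMap.sum_apply]
    rw [Finset.sum_congr rfl (fun j _ => hterm j)]
    have hsingle : ∀ k : V, (Pi.single (q : V) (1 : ℝ) : V → ℝ) k = if k = (q : V) then 1 else 0 := by
      intro k; rw [Pi.single_apply]
    have hsum : (∑ j, Af G γ δ x i j *
          ((Pi.single (q : V) (1 : ℝ) : V → ℝ) i - (Pi.single (q : V) (1 : ℝ) : V → ℝ) j))
        = (if i = (q : V) then ∑ j, Af G γ δ x i j else 0) - Af G γ δ x i q := by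
      simp only [hsingle, mul_sub]
      rw [Finset.sum_sub_distrib]
      congr 1
      · split
        · simp
        · simp
      · rw [Finset.sum_congr rfl (fun j _ => by
          rw [mul_ite, mul_one, mul_zero])]
        simp
    rw [hsum]
    rw [smul_eq_mul, mul_comm, div_eq_mul_inv]
  rw [heval]

lemma Af_pos (hγ : 0 < γ) {i j : V} (hadj : G.Adj i j)
    (hd : Real.sqrt (max δ γ⁻¹) < |x i - x j|) : 0 < Af G γ δ x i j := by
  have habs : 0 < |x i - x j| := lt_of_le_of_lt (Real.sqrt_nonneg _) hd
  have hsq : max δ γ⁻¹ < (x i - x j) ^ 2 := by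
    have := (Real.sqrt_lt' habs).mp hd
    rwa [sq_abs] at this
  have hδ2 : δ < (x i - x j) ^ 2 := lt_of_le_of_lt (le_max_left _ _) hsq
  have hγ2 : γ⁻¹ < (x i - x j) ^ 2 := lt_of_le_of_lt (le_max_right _ _) hsq
  have hγd : 1 < γ * (x i - x j) ^ 2 := by
    have := (mul_lt_mul_iff_right₀ hγ).mpr hγ2
    rwa [mul_inv_cancel₀ (ne_of_gt hγ)] at this
  have hu : 0 < γ * (x i - x j) ^ 2 - γ * δ := by nlinarith
  have hexp : (1 : ℝ) < Real.exp (γ * (x i - x j) ^ 2 - γ * δ) := by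
    calc (1:ℝ) = Real.exp 0 := Real.exp_zero.symm
    _ < _ := Real.exp_lt_exp.mpr hu
  have hw : wt G γ δ x i j < 1 / 2 := by
    rw [wt, if_pos hadj]
    rw [div_lt_div_iff₀ (by positivity) (by norm_num)]
    linarith
  have hwpos : 0 < wt G γ δ x i j := wt_pos G γ δ x hadj
  have hfac : 1 < 2 * γ * (x i - x j) ^ 2 * (1 - wt G γ δ x i j) := by nlinarith
  unfold Af
  have : 0 < 2 * γ * (x i - x j) ^ 2 * (1 - wt G γ δ x i j) - 1 := by linarith
  exact mul_pos hwpos this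

end SBCM4

/-- At a linearly stable steady state of the SBCM with `γ > 0`, every
persuadable node `i` has a neighbor `j` with `|x_i − x_j| ≤ √(max(δ, 1/γ))`. -/
theorem stmt_4 {V : Type*} [Fintype V] [DecidableEq V]
    (G : SimpleGraph V) [DecidableRel G.Adj] (Z : Finset V)
    (hnbr : ∀ i : V, i ∉ Z → ∃ j, G.Adj i j)
    (γ δ : ℝ) (hγ : 0 < γ) (hδ : 0 ≤ δ)
    (x : V → ℝ) (hss : ∀ i, SBCM.F G Z γ δ x i = 0)
    (hstab : SBCM.LinStable (SBCM.Jp G Z γ δ x)) :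
    ∀ i : V, i ∉ Z → ∃ j, G.Adj i j ∧ |x i - x j| ≤ Real.sqrt (max δ γ⁻¹) := by
  intro i hi
  by_contra hcon
  push_neg at hcon
  classical
  -- abbreviations
  set s : V → ℝ := fun p => ∑ j, SBCM.wt G γ δ x p j with hs
  set A : V → V → ℝ := SBCM4.Af G γ δ x with hA
  have hspos : ∀ p : {v : V // v ∉ Z}, 0 < s (p : V) :=
    fun p => SBCM4.sum_wt_pos G γ δ x (p : V) (hnbr p p.2)
  set M : Matrix {v : V // v ∉ Z} {v : V // v ∉ Z} ℝ :=
    fun p q => (if (p : V) = (q : V) then ∑ j, A (p : V) j else 0) - A (p : V) (q : V) with hM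
  have hJ : ∀ p q : {v : V // v ∉ Z}, SBCM.Jp G Z γ δ x p q = M p q / s (p : V) :=
    fun p q => SBCM4.Jp_eq G Z γ δ x hnbr hss p q
  have hMsymm : ∀ p q : {v : V // v ∉ Z}, M p q = M q p := by
    intro p q
    have hAs : A (p : V) (q : V) = A (q : V) (p : V) := SBCM4.Af_symm G γ δ x _ _
    by_cases h : (p : V) = (q : V)
    · simp only [hM]
      rw [if_pos h, if_pos h.symm, hAs, h]
    · simp only [hM]
      rw [if_neg h, if_neg (fun hc => h hc.symm), hAs]
  set t : {v : V // v ∉ Z} → ℝ := fun p => Real.sqrt (s (p : V))⁻¹ with ht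
  have htpos : ∀ p, 0 < t p := fun p => Real.sqrt_pos.mpr (inv_pos.mpr (hspos p))
  have htt : ∀ p, t p * t p = (s (p : V))⁻¹ :=
    fun p => Real.mul_self_sqrt (inv_nonneg.mpr (hspos p).le)
  set B : Matrix {v : V // v ∉ Z} {v : V // v ∉ Z} ℝ :=
    fun p q => t p * M p q * t q with hB
  have hBH : B.IsHermitian := by
    refine Matrix.IsHermitian.ext (fun p q => ?_)
    simp only [hB, star_trivial]
    rw [hMsymm q p]; ring
  -- every eigenvalue of B is a (real) eigenvalue of the Jacobian
  have heig : ∀ k, SBCM.HasEig (SBCM.Jp G Z γ δ x) (hBH.eigenvalues k) := by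
    intro k
    have hv := hBH.mulVec_eigenvectorBasis k
    set ψ : {v : V // v ∉ Z} → ℝ := ⇑(hBH.eigenvectorBasis k) with hψ
    have hψne : ψ ≠ 0 := by
      intro hc
      exact hBH.eigenvectorBasis.orthonormal.ne_zero k (by ext p; simpa using congrFun hc p)
    refine ⟨fun p => t p * ψ p, ?_, ?_⟩
    · obtain ⟨p, hp⟩ := Function.ne_iff.mp hψne
      exact Function.ne_iff.mpr ⟨p, mul_ne_zero (ne_of_gt (htpos p)) hp⟩
    · funext p
      have hBv : (B.mulVec ψ) p = hBH.eigenvalues k * ψ p := by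
        rw [hv]; simp
      calc (SBCM.Jp G Z γ δ x).mulVec (fun p => t p * ψ p) p
          = ∑ q, (M p q / s (p : V)) * (t q * ψ q) := by
            simp only [Matrix.mulVec, dotProduct]
            exact Finset.sum_congr rfl (fun q _ => by rw [hJ p q])
        _ = t p * ∑ q, B p q * ψ q := by
            rw [Finset.mul_sum]
            refine Finset.sum_congr rfl (fun q _ => ?_)
            rw [hB, div_eq_mul_inv, ← htt p]
            ring
        _ = t p * (B.mulVec ψ) p := by simp only [Matrix.mulVec, dotProduct]
        _ = hBH.eigenvalues k * (t p * ψ p) := by rw [hBv]; ring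
        _ = (hBH.eigenvalues k • fun p => t p * ψ p) p := by simp
  have hneg : ∀ k, hBH.eigenvalues k < 0 := fun k => hstab _ (heig k)
  -- hence the diagonal entries of B are nonpositive
  set ip : {v : V // v ∉ Z} := ⟨i, hi⟩ with hip
  have hdiag : B ip ip ≤ 0 := by
    have hspec := hBH.spectral_theorem
    set U : Matrix {v : V // v ∉ Z} {v : V // v ∉ Z} ℝ :=
      ((Matrix.IsHermitian.eigenvectorUnitary hBH :
        Matrix.unitaryGroup {v : V // v ∉ Z} ℝ) :
          Matrix {v : V // v ∉ Z} {v : V // v ∉ Z} ℝ) with hU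
    have hBii : B ip ip = ∑ k, hBH.eigenvalues k * (U ip k) ^ 2 := by
      conv_lhs => rw [hspec]
      rw [Unitary.conjStarAlgAut_apply]
      rw [Matrix.mul_apply]
      refine Finset.sum_congr rfl (fun k _ => ?_)
      rw [Matrix.mul_diagonal]
      simp [Matrix.conjTranspose_apply, Matrix.star_apply, Function.comp]
      rw [hU, Matrix.IsHermitian.eigenvectorUnitary_apply]
      ring
    rw [hBii]
    refine Finset.sum_nonpos (fun k _ => ?_)
    exact mul_nonpos_iff.mpr (Or.inr ⟨(hneg k).le, sq_nonneg _⟩)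
  -- but the diagonal entry at i is positive: contradiction
  have hMii : 0 < M ip ip := by
    have hA0 : A i i = 0 := SBCM4.Af_self G γ δ x i
    have : M ip ip = ∑ j, A i j := by
      show (if (i : V) = i then ∑ j, A i j else 0) - A i i = ∑ j, A i j
      rw [if_pos rfl, hA0, sub_zero]
    rw [this]
    obtain ⟨j0, hj0⟩ := hnbr i hi
    refine Finset.sum_pos' (fun j _ => ?_) ⟨j0, Finset.mem_univ j0, ?_⟩
    · by_cases hadj : G.Adj i j
      · exact (SBCM4.Af_pos G γ δ x hγ hadj (hcon j hadj)).le
      · rw [hA]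
        unfold SBCM4.Af
        rw [SBCM.wt, if_neg hadj]
        simp
    · exact SBCM4.Af_pos G γ δ x hγ hj0 (hcon j0 hj0)
  have hBii_pos : 0 < B ip ip := by
    have h1 := htpos ip
    have h2 : B ip ip = t ip * M ip ip * t ip := rfl
    rw [h2]
    exact mul_pos (mul_pos h1 hMii) h1
  linarith
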